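/- arXiv:2411.02694 — 2 statements merged into one kernel-verified Lean document; each statement's English description precedes it below -/
import Mathlib

section
/- Under the physical-intensity assumption, with κ = e^{-h·b}·b·h²·e^{-B·τ_max} and C = min(B·(T+τ_max), N+N'), the Euclidean diameter of Θ_K is at most 2·C/κ: for all z₊, z₋ ∈ Θ_K, ‖z₊ − z₋‖₂ ≤ 2·C/κ. -/
open Finset
open scoped BigOperators RealInnerProductSpace

noncomputable section

/-- Real value of a Boolean: `1` if `true`, `0` if `false`. -/
def bval (b : Bool) : ℝ := if b then 1 else 0

/-- The time window of indices `-N'+1, …, N`. -/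
def window (N N' : ℕ) : Finset ℤ := Finset.Icc (-(N' : ℤ) + 1) (N : ℤ)

/-- The probability mass function of the discrete-time Bernoulli process with
true conditional intensities `Λ`. -/
def seqPMF (N N' : ℕ) (h : ℝ) (Λ : ℤ → (ℤ → Bool) → ℝ) (y : ℤ → Bool) : ℝ :=
  ∏ t ∈ window N N',
    ((1 - bval (y t)) * Real.exp (-(h * Λ t y))
      + bval (y t) * (1 - Real.exp (-(h * Λ t y))))

/-- Extension of a window-indexed binary sequence to all of `ℤ` (by `false`). -/
def extSeq (N N' : ℕ) (w : ↥(window N N') → Bool) : ℤ → Bool :=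
  fun i => if hi : i ∈ window N N' then w ⟨i, hi⟩ else false

/-- Expectation with respect to the law of the process. -/
def expect (N N' : ℕ) (h : ℝ) (Λ : ℤ → (ℤ → Bool) → ℝ) (f : (ℤ → Bool) → ℝ) : ℝ :=
  ∑ w : ↥(window N N') → Bool, seqPMF N N' h Λ (extSeq N N' w) * f (extSeq N N' w)

/-- The index set of the kernel parameter: pairs `(i, t)` with `1 ≤ t ≤ N` and
`t - N' ≤ i ≤ t - 1`. -/
def kIdx (N N' : ℕ) : Finset (ℤ × ℤ) :=
  (Finset.Icc (-(N' : ℤ) + 1) (N : ℤ) ×ˢ Finset.Icc 1 (N : ℤ)).filter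
    (fun p => p.2 - (N' : ℤ) ≤ p.1 ∧ p.1 ≤ p.2 - 1)

/-- The space `ℝ^{N·N'}` of kernel parameters, with Euclidean structure. -/
abbrev Param (N N' : ℕ) := EuclideanSpace ℝ ↥(kIdx N N')

/-- Entry `z_{i,t}` of a kernel parameter (zero outside the index set). -/
def zent (N N' : ℕ) (z : Param N N') (i t : ℤ) : ℝ :=
  if hm : (i, t) ∈ kIdx N N' then z ⟨(i, t), hm⟩ else 0

/-- The model intensity `Λ_t(z; y) = μ + ∑_{i = t-N'}^{t-1} y_i z_{i,t}`. -/
def modelIntensity (N N' : ℕ) (μ : ℝ) (z : Param N N') (t : ℤ) (y : ℤ → Bool) : ℝ :=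
  μ + ∑ i ∈ Finset.Icc (t - (N' : ℤ)) (t - 1), bval (y i) * zent N N' z i t

/-- The history vector `η_t(y)`: entry `y_i` at index `(i, t)`, zero elsewhere. -/
def eta (N N' : ℕ) (t : ℤ) (y : ℤ → Bool) : Param N N' :=
  WithLp.toLp 2 (fun p : ↥(kIdx N N') => if p.1.2 = t then bval (y p.1.1) else 0)

/-- The link function `φ(x) = 1 - e^{-x}`. -/
def phi (x : ℝ) : ℝ := 1 - Real.exp (-x)

/-- The per-trajectory VI vector field
`Ĝ(z; y) = ∑_{t=1}^N (φ(h Λ_t(z;y)) - y_t) η_t(y)`. -/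
def Ghat (N N' : ℕ) (h μ : ℝ) (z : Param N N') (y : ℤ → Bool) : Param N N' :=
  ∑ t ∈ Finset.Icc (1 : ℤ) (N : ℤ),
    (phi (h * modelIntensity N N' μ z t y) - bval (y t)) • eta N N' t y

/-- Expectation of a vector-valued statistic with respect to the law of the process. -/
def expectVec {E : Type*} [AddCommMonoid E] [Module ℝ E]
    (N N' : ℕ) (h : ℝ) (Λ : ℤ → (ℤ → Bool) → ℝ) (f : (ℤ → Bool) → E) : E :=
  ∑ w : ↥(window N N') → Bool, seqPMF N N' h Λ (extSeq N N' w) • f (extSeq N N' w)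

lemma hAlem (b B h : ℝ) (hb : 0 < b) (hbB : b ≤ B) :
    (B - b) * b * h ^ 2 ≤ B * B * h ^ 2 := by
  nlinarith [mul_nonneg (sq_nonneg (B - b)) (sq_nonneg h),
    mul_nonneg (mul_nonneg (by linarith : (0:ℝ) ≤ B - b) hb.le) (sq_nonneg h),
    mul_nonneg (sq_nonneg b) (sq_nonneg h)]

lemma xlem (x : ℝ) (hx : 0 < x) : x^2 * Real.exp (-x) ≤ 2 * min x 1 := by
  rcases le_total x 1 with hc | hc
  · rw [min_eq_left hc]
    have h1 : Real.exp (-x) ≤ 1 := Real.exp_le_one_iff.mpr (by linarith)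
    have h2 : 0 < Real.exp (-x) := Real.exp_pos _
    nlinarith
  · rw [min_eq_right hc]
    have hq : 1 + x + x^2/2 ≤ Real.exp x := Real.quadratic_le_exp_of_nonneg (by linarith)
    have hp : Real.exp (-x) * Real.exp x = 1 := by
      rw [← Real.exp_add]; simp
    have h2 : 0 < Real.exp (-x) := Real.exp_pos _
    nlinarith

/-- diameter bound for `Θ_K`: under the physical-intensity
assumption, `‖z₊ - z₋‖ ≤ 2 C / κ` for all `z₊, z₋ ∈ Θ_K`, where
`κ = e^{-h b} b h² e^{-B τ_max}` and `C = min(B (T + τ_max), N + N')`. -/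
theorem ThetaK_diameter_bounded
    (N N' : ℕ) (hN : 1 ≤ N) (hN' : 1 ≤ N') (h : ℝ) (hh : 0 < h)
    (Λ : ℤ → (ℤ → Bool) → ℝ)
    (hdep : ∀ (t : ℤ) (y y' : ℤ → Bool),
      (∀ i ∈ window N N', i < t → y i = y' i) → Λ t y = Λ t y')
    (μ : ℝ) (hμ : 0 < μ)
    (b B : ℝ) (hb : 0 < b) (hbB : b ≤ B)
    (hstar : ∀ t ∈ window N N', ∀ y : ℤ → Bool,
      0 < seqPMF N N' h Λ y → b ≤ Λ t y ∧ Λ t y ≤ B)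
    (ΘK : Set (Param N N')) (hne : ΘK.Nonempty)
    (hcomp : IsCompact ΘK) (hconv : Convex ℝ ΘK)
    (zstar : Param N N') (hzs : zstar ∈ ΘK)
    (htrue : ∀ t ∈ Finset.Icc (1 : ℤ) (N : ℤ), ∀ y : ℤ → Bool,
      Λ t y = modelIntensity N N' μ zstar t y)
    (hphys : ∀ z ∈ ΘK, ∀ t ∈ Finset.Icc (1 : ℤ) (N : ℤ), ∀ y : ℤ → Bool,
      b ≤ modelIntensity N N' μ z t y ∧ modelIntensity N N' μ z t y ≤ B) :
    ∀ zp ∈ ΘK, ∀ zm ∈ ΘK,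
      ‖zp - zm‖
        ≤ 2 * (min (B * ((N : ℝ) * h + (N' : ℝ) * h)) ((N : ℝ) + (N' : ℝ)))
          / (Real.exp (-(h * b)) * b * h ^ 2 * Real.exp (-(B * ((N' : ℝ) * h)))) := by
  intro zp hzp zm hzm
  have h1N : (1 : ℤ) ∈ Finset.Icc (1 : ℤ) (N : ℤ) :=
    Finset.mem_Icc.2 ⟨le_refl 1, by exact_mod_cast hN⟩
  -- baseline bounds
  have hμB : b ≤ μ ∧ μ ≤ B := by
    have := hphys zp hzp 1 h1N (fun _ => false)
    simpa [modelIntensity, bval] using this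
  -- coordinate bounds
  have key : ∀ z ∈ ΘK, ∀ p : ↥(kIdx N N'), b ≤ μ + z p ∧ μ + z p ≤ B := by
    intro z hz p
    obtain ⟨⟨i, t⟩, hm⟩ := p
    have hmem := hm
    simp only [kIdx, Finset.mem_filter, Finset.mem_product, Finset.mem_Icc] at hmem
    have ht : t ∈ Finset.Icc (1 : ℤ) (N : ℤ) := Finset.mem_Icc.2 hmem.1.2
    have hiIcc : i ∈ Finset.Icc (t - (N' : ℤ)) (t - 1) := Finset.mem_Icc.2 hmem.2
    have hMI : modelIntensity N N' μ z t (fun j => decide (j = i))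
        = μ + z ⟨(i, t), hm⟩ := by
      unfold modelIntensity
      congr 1
      rw [Finset.sum_eq_single_of_mem i hiIcc]
      · simp [bval, zent, hm]
      · intro j _ hj
        simp [bval, hj]
    have := hphys z hz t ht (fun j => decide (j = i))
    rw [hMI] at this
    exact this
  have hdiff : ∀ p : ↥(kIdx N N'), |zp p - zm p| ≤ B - b := by
    intro p
    have h1 := key zp hzp p
    have h2 := key zm hzm p
    rw [abs_le]
    constructor <;> linarith [h1.1, h1.2, h2.1, h2.2]
  -- norm bound
  have hBb : (0:ℝ) ≤ B - b := by linarith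
  have hcard : (kIdx N N').card ≤ (N + N') * N := by
    calc (kIdx N N').card
        ≤ ((Finset.Icc (-(N' : ℤ) + 1) (N : ℤ)) ×ˢ (Finset.Icc 1 (N : ℤ))).card :=
          Finset.card_filter_le _ _
      _ ≤ (N + N') * N := by
          rw [Finset.card_product]
          have c1 : (Finset.Icc (-(N' : ℤ) + 1) (N : ℤ)).card = N + N' := by
            rw [Int.card_Icc]; omega
          have c2 : (Finset.Icc (1 : ℤ) (N : ℤ)).card = N := by
            rw [Int.card_Icc]; omega
          rw [c1, c2]
  have hcardR : ((kIdx N N').card : ℝ) ≤ ((N:ℝ) + N') * ((N:ℝ) + N') := by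
    have h2 : (kIdx N N').card ≤ (N + N') * (N + N') :=
      le_trans hcard (Nat.mul_le_mul_left _ (Nat.le_add_right N N'))
    calc ((kIdx N N').card : ℝ) ≤ (((N + N') * (N + N') : ℕ) : ℝ) := by exact_mod_cast h2
      _ = ((N:ℝ) + N') * ((N:ℝ) + N') := by push_cast; ring
  have hnorm : ‖zp - zm‖ ≤ ((N:ℝ) + N') * (B - b) := by
    rw [EuclideanSpace.norm_eq]
    have hsum : ∑ p : ↥(kIdx N N'), ‖(zp - zm) p‖ ^ 2
        ≤ ((kIdx N N').card : ℝ) * (B - b) ^ 2 := by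
      calc ∑ p : ↥(kIdx N N'), ‖(zp - zm) p‖ ^ 2
          ≤ ∑ _p : ↥(kIdx N N'), (B - b) ^ 2 := by
            apply Finset.sum_le_sum
            intro p _
            have := hdiff p
            have habs : ‖(zp - zm) p‖ ≤ B - b := by
              rw [PiLp.sub_apply, Real.norm_eq_abs]; exact this
            exact pow_le_pow_left₀ (norm_nonneg _) habs 2
        _ = ((kIdx N N').card : ℝ) * (B - b) ^ 2 := by
            rw [Finset.sum_const, Finset.card_univ, Fintype.card_coe, nsmul_eq_mul]
    calc √(∑ p : ↥(kIdx N N'), ‖(zp - zm) p‖ ^ 2)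
        ≤ √((((N:ℝ) + N') * (B - b)) ^ 2) := by
          apply Real.sqrt_le_sqrt
          calc ∑ p : ↥(kIdx N N'), ‖(zp - zm) p‖ ^ 2
              ≤ ((kIdx N N').card : ℝ) * (B - b) ^ 2 := hsum
            _ ≤ (((N:ℝ) + N') * (B - b)) ^ 2 := by nlinarith [sq_nonneg (B - b)]
      _ = ((N:ℝ) + N') * (B - b) := by
          rw [Real.sqrt_sq (by positivity)]
  -- arithmetic bound
  refine le_trans hnorm ?_
  have hκ : 0 < Real.exp (-(h * b)) * b * h ^ 2 * Real.exp (-(B * ((N' : ℝ) * h))) := by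
    positivity
  rw [le_div_iff₀ hκ]
  have hBh : 0 < B * h := by nlinarith
  have hnn : (0:ℝ) < (N:ℝ) + N' := by
    have : (1:ℝ) ≤ (N:ℝ) := by exact_mod_cast hN
    have : (1:ℝ) ≤ (N':ℝ) := by exact_mod_cast hN'
    linarith [show (1:ℝ) ≤ (N:ℝ) from by exact_mod_cast hN]
  have hmin : min (B * ((N : ℝ) * h + (N' : ℝ) * h)) ((N : ℝ) + (N' : ℝ))
      = ((N:ℝ) + N') * min (B * h) 1 := by
    rw [show B * ((N : ℝ) * h + (N' : ℝ) * h) = (B * h) * ((N:ℝ) + N') by ring]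
    rcases le_total (B * h) 1 with hc | hc
    · rw [min_eq_left (by nlinarith), min_eq_left hc]; ring
    · rw [min_eq_right (by nlinarith), min_eq_right hc]; ring
  rw [hmin]
  -- exponential comparisons
  have he1 : Real.exp (-(h * b)) ≤ 1 := Real.exp_le_one_iff.mpr (by nlinarith)
  have he2 : Real.exp (-(B * ((N' : ℝ) * h))) ≤ Real.exp (-(B * h)) := by
    apply Real.exp_le_exp.mpr
    have h1 : (1:ℝ) ≤ (N':ℝ) := by exact_mod_cast hN'
    nlinarith
  have he1p : 0 < Real.exp (-(h * b)) := Real.exp_pos _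
  have he2p : 0 < Real.exp (-(B * ((N' : ℝ) * h))) := Real.exp_pos _
  have he3p : 0 < Real.exp (-(B * h)) := Real.exp_pos _
  have hx := xlem (B * h) hBh
  -- reduce to scalar inequality
  have hscal : (B - b) * (Real.exp (-(h * b)) * b * h ^ 2 * Real.exp (-(B * ((N' : ℝ) * h))))
      ≤ 2 * min (B * h) 1 := by
    have hBpos : 0 < B := lt_of_lt_of_le hb hbB
    have hA : (B - b) * b * h ^ 2 ≤ B * B * h ^ 2 := hAlem b B h hb hbB
    have hE : Real.exp (-(h * b)) * Real.exp (-(B * ((N' : ℝ) * h))) ≤ Real.exp (-(B * h)) := by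
      calc Real.exp (-(h * b)) * Real.exp (-(B * ((N' : ℝ) * h)))
          ≤ 1 * Real.exp (-(B * h)) := mul_le_mul he1 he2 he2p.le zero_le_one
        _ = Real.exp (-(B * h)) := one_mul _
    have step1 : (B - b) * (Real.exp (-(h * b)) * b * h ^ 2 * Real.exp (-(B * ((N' : ℝ) * h))))
        ≤ (B * h)^2 * Real.exp (-(B * h)) := by
      calc (B - b) * (Real.exp (-(h * b)) * b * h ^ 2 * Real.exp (-(B * ((N' : ℝ) * h))))
          = ((B - b) * b * h ^ 2) * (Real.exp (-(h * b)) * Real.exp (-(B * ((N' : ℝ) * h)))) := by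
            ring
        _ ≤ (B * B * h ^ 2) * Real.exp (-(B * h)) :=
            mul_le_mul hA hE (by positivity) (by positivity)
        _ = (B * h)^2 * Real.exp (-(B * h)) := by ring
    linarith [hx]
  calc ((N:ℝ) + N') * (B - b) * (Real.exp (-(h * b)) * b * h ^ 2 * Real.exp (-(B * ((N' : ℝ) * h))))
      = ((N:ℝ) + N') * ((B - b) * (Real.exp (-(h * b)) * b * h ^ 2 * Real.exp (-(B * ((N' : ℝ) * h))))) := by ring
    _ ≤ ((N:ℝ) + N') * (2 * min (B * h) 1) := by
        apply mul_le_mul_of_nonneg_left hscal hnn.le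
    _ = 2 * (((N:ℝ) + N') * min (B * h) 1) := by ring
end
end

section
/- Let V be a finite set, N ≥ 1 an integer, h > 0, T = N·h, and I_j = ((j−1)·h, j·h] for 1 ≤ j ≤ N. Let λ : ℝ × V → ℝ satisfy λ(t, u) = Λ_j(u) for all t ∈ I_j and u ∈ V, set λ̄(t) = Σ_{u∈V} λ(t, u) and Λ̄_j = Σ_{u∈V} Λ_j(u), and assume Λ̄_j > 0 for every j. Fix event indices 1 ≤ j(1) < … < j(n) ≤ N and nodes u_1, …, u_n ∈ V. Then exp(−∫_{0}^{T} λ̄(s) ds) · ∏_{k=1}^{n} ∫_{(j(k)−1)h}^{j(k)h} λ(t, u_k)·exp(∫_{t}^{j(k)h} λ̄(s) ds) dt = exp(−h·Σ_{j=1}^{N} Λ̄_j) · ∏_{k=1}^{n} (e^{h·Λ̄_{j(k)}} − 1)·Λ_{j(k)}(u_k)/Λ̄_{j(k)}. -/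
open scoped BigOperators

/-- Integral of a function equal to a constant on `Set.Ioc a b`, over `[t, b]`. -/
theorem aux_tail_int (c a b t : ℝ) (ht : a ≤ t) (ht2 : t ≤ b) (f : ℝ → ℝ)
    (hf : ∀ x ∈ Set.Ioc a b, f x = c) :
    ∫ s in t..b, f s = (b - t) * c := by
  rw [intervalIntegral.integral_congr_ae (g := fun _ => c)]
  · simp [smul_eq_mul]
  · refine Filter.Eventually.of_forall fun x hx => ?_
    rw [Set.uIoc_of_le ht2] at hx
    exact hf x ⟨lt_of_le_of_lt ht hx.1, hx.2⟩

theorem aux_exp_int (C c a b : ℝ) (hc : c ≠ 0) :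
    ∫ t in a..b, C * Real.exp (c * (b - t)) = (Real.exp (c * (b - a)) - 1) * C / c := by
  rw [intervalIntegral.integral_const_mul,
    intervalIntegral.integral_comp_sub_left (fun x => Real.exp (c * x)) b,
    intervalIntegral.integral_comp_mul_left Real.exp hc, integral_exp]
  simp only [sub_self, mul_zero, Real.exp_zero, smul_eq_mul]
  field_simp

/-- discrete-time likelihood on a network: if `λ(t, u)` is
piecewise constant in time, equal to `Λ_j(u)` on `I_j = ((j-1)h, jh]`, with
`Λ̄_j = ∑_u Λ_j(u) > 0`, then for events at grid windows `I_{j(k)}` with nodes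
`u_k`,
`e^{-∫_0^T λ̄} ∏_k ∫_{I_{j(k)}} λ(t, u_k) e^{∫_t^{j(k)h} λ̄} dt
  = e^{-h ∑_j Λ̄_j} ∏_k (e^{h Λ̄_{j(k)}} - 1) Λ_{j(k)}(u_k) / Λ̄_{j(k)}`. -/
theorem discrete_time_likelihood_network
    {V : Type*} [Fintype V] (N : ℕ) (hN : 1 ≤ N) (h : ℝ) (hh : 0 < h)
    (lam : ℝ → V → ℝ) (Λ : ℕ → V → ℝ)
    (hpc : ∀ j ∈ Finset.Icc 1 N, ∀ u : V,
      ∀ t ∈ Set.Ioc (((j : ℝ) - 1) * h) ((j : ℝ) * h), lam t u = Λ j u)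
    (hpos : ∀ j ∈ Finset.Icc 1 N, 0 < ∑ u : V, Λ j u)
    (n : ℕ) (jf : ℕ → ℕ) (us : ℕ → V)
    (hj : ∀ m ∈ Finset.Icc 1 n, 1 ≤ jf m ∧ jf m ≤ N)
    (hmono : ∀ m m' : ℕ, 1 ≤ m → m < m' → m' ≤ n → jf m < jf m') :
    Real.exp (-∫ s in (0 : ℝ)..((N : ℝ) * h), ∑ u : V, lam s u)
        * ∏ k ∈ Finset.Icc 1 n,
            ∫ t in (((jf k : ℝ) - 1) * h)..((jf k : ℝ) * h),
              lam t (us k) * Real.exp (∫ s in t..((jf k : ℝ) * h), ∑ u : V, lam s u)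
      = Real.exp (-(h * ∑ j ∈ Finset.Icc 1 N, ∑ u : V, Λ j u))
        * ∏ k ∈ Finset.Icc 1 n,
            (Real.exp (h * ∑ u : V, Λ (jf k) u) - 1)
              * Λ (jf k) (us k) / (∑ u : V, Λ (jf k) u) := by
  -- the total intensity is constant on each cell
  have hcell : ∀ j ∈ Finset.Icc 1 N,
      ∀ t ∈ Set.Ioc (((j : ℝ) - 1) * h) ((j : ℝ) * h),
        (∑ u : V, lam t u) = ∑ u : V, Λ j u := by
    intro j hjN t ht
    exact Finset.sum_congr rfl fun u _ => hpc j hjN u t ht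
  -- tail integral over a cell
  have htail : ∀ j ∈ Finset.Icc 1 N, ∀ t, ((j : ℝ) - 1) * h ≤ t → t ≤ (j : ℝ) * h →
      (∫ s in t..((j : ℝ) * h), ∑ u : V, lam s u)
        = ((j : ℝ) * h - t) * ∑ u : V, Λ j u := by
    intro j hjN t ht ht2
    exact aux_tail_int _ _ _ _ ht ht2 _ (hcell j hjN)
  -- Step 1: the full integral
  have hle : ∀ j : ℕ, ((j : ℝ) - 1) * h ≤ (j : ℝ) * h := by
    intro j
    nlinarith [hh.le]
  have hstep1 : (∫ s in (0 : ℝ)..((N : ℝ) * h), ∑ u : V, lam s u)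
      = h * ∑ j ∈ Finset.Icc 1 N, ∑ u : V, Λ j u := by
    have hsplit := intervalIntegral.sum_integral_adjacent_intervals
      (a := fun i : ℕ => (i : ℝ) * h) (μ := MeasureTheory.volume)
      (f := fun s => ∑ u : V, lam s u) (n := N) ?_
    · have hzero : ((0 : ℕ) : ℝ) * h = 0 := by norm_num
      rw [hzero] at hsplit
      rw [← hsplit]
      rw [Finset.mul_sum, show Finset.Icc 1 N = Finset.Ico 1 (N + 1) by
        rw [Finset.Ico_add_one_right_eq_Icc], Finset.sum_Ico_eq_sum_range]
      simp only [Nat.add_sub_cancel]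
      refine Finset.sum_congr rfl fun i hi => ?_
      have hi' : i + 1 ∈ Finset.Icc 1 N := by
        simp only [Finset.mem_range] at hi
        simp only [Finset.mem_Icc]
        omega
      have h1 : ((i : ℝ)) * h = (((i + 1 : ℕ) : ℝ) - 1) * h := by push_cast; ring
      rw [h1, htail (i + 1) hi' _ le_rfl (hle _), Nat.add_comm 1 i]
      push_cast
      ring
    · intro i hi
      have hi' : i + 1 ∈ Finset.Icc 1 N := by simp only [Finset.mem_Icc]; omega
      refine (intervalIntegrable_const (c := ∑ u : V, Λ (i + 1) u)).congr ?_
      intro x hx'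
      rw [Set.uIoc_of_le (by push_cast; nlinarith [hh.le] : (i : ℝ) * h ≤ ((i + 1 : ℕ) : ℝ) * h)] at hx'
      have hx'' : x ∈ Set.Ioc ((((i + 1 : ℕ) : ℝ) - 1) * h) (((i + 1 : ℕ) : ℝ) * h) := by
        constructor
        · have : (((i + 1 : ℕ) : ℝ) - 1) * h = (i : ℝ) * h := by push_cast; ring
          rw [this]; exact hx'.1
        · exact hx'.2
      exact (hcell (i + 1) hi' x hx'').symm
  -- Step 2: each event-window integral
  have hstep2 : ∀ k ∈ Finset.Icc 1 n,
      (∫ t in (((jf k : ℝ) - 1) * h)..((jf k : ℝ) * h),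
          lam t (us k) * Real.exp (∫ s in t..((jf k : ℝ) * h), ∑ u : V, lam s u))
        = (Real.exp (h * ∑ u : V, Λ (jf k) u) - 1)
            * Λ (jf k) (us k) / (∑ u : V, Λ (jf k) u) := by
    intro k hk
    set j := jf k with hjdef
    have hjN : j ∈ Finset.Icc 1 N := by
      have := hj k hk
      simp only [Finset.mem_Icc]
      exact this
    have hc : 0 < ∑ u : V, Λ j u := hpos j hjN
    set c := ∑ u : V, Λ j u with hcdef
    have hcongr : (∫ t in (((j : ℝ) - 1) * h)..((j : ℝ) * h),
          lam t (us k) * Real.exp (∫ s in t..((j : ℝ) * h), ∑ u : V, lam s u))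
        = ∫ t in (((j : ℝ) - 1) * h)..((j : ℝ) * h),
            Λ j (us k) * Real.exp (c * ((j : ℝ) * h - t)) := by
      refine intervalIntegral.integral_congr_ae ?_
      refine Filter.Eventually.of_forall fun t ht' => ?_
      rw [Set.uIoc_of_le (hle j)] at ht'
      rw [hpc j hjN (us k) t ht', htail j hjN t ht'.1.le ht'.2,
        mul_comm ((j : ℝ) * h - t)]
    rw [hcongr, aux_exp_int _ _ _ _ hc.ne']
    have : c * ((j : ℝ) * h - ((j : ℝ) - 1) * h) = h * c := by ring
    rw [this]
  -- combine
  rw [hstep1, Finset.prod_congr rfl hstep2]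
end
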